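/- arXiv:1906.01808 — 2 statements merged into one kernel-verified Lean document; each statement's English description precedes it below -/
import Mathlib

section
/- Let 0 < r ≤ 1 and u > 0. Then (2/r) ∫_{-∞}^{0} (-v) · e^{-v^2/r} · e^{-(1-r) u^2 / r} · I_0( 2 sqrt(1-r) · v · u / r ) dv = 1. -/
open MeasureTheory Real

/-- Modified Bessel function of the first kind of order zero,
`I₀(y) = (1/π) ∫_0^π e^{y cos φ} dφ`. -/
noncomputable def besselI0 (y : ℝ) : ℝ :=
  (1 / Real.pi) * ∫ φ in (0:ℝ)..Real.pi, Real.exp (y * Real.cos φ)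

lemma besselI0_neg (y : ℝ) : besselI0 (-y) = besselI0 y := by
  unfold besselI0
  congr 1
  have h := intervalIntegral.integral_comp_sub_left (a := (0:ℝ)) (b := Real.pi)
    (fun φ => Real.exp (y * Real.cos φ)) Real.pi
  simp only [sub_zero, sub_self] at h
  rw [← h]
  congr 1
  ext φ
  rw [Real.cos_pi_sub]
  ring_nf

lemma cosint_Ioo (c : ℝ) :
    ∫ y in Set.Ioo (-Real.pi) Real.pi, Real.exp (c * Real.cos y)
      = 2 * (Real.pi * besselI0 c) := by
  have hcont : ∀ a b : ℝ, IntervalIntegrable (fun y => Real.exp (c * Real.cos y)) volume a b :=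
    fun a b =>
      (Real.continuous_exp.comp (continuous_const.mul Real.continuous_cos)).intervalIntegrable a b
  rw [← integral_Ioc_eq_integral_Ioo,
    ← intervalIntegral.integral_of_le (by linarith [Real.pi_pos] : (-Real.pi) ≤ Real.pi)]
  have hsplit := intervalIntegral.integral_add_adjacent_intervals
    (a := -Real.pi) (b := 0) (c := Real.pi) (f := fun y => Real.exp (c * Real.cos y))
    (hcont _ _) (hcont _ _)
  rw [← hsplit]
  have hneg : (∫ y in (-Real.pi)..(0:ℝ), Real.exp (c * Real.cos y))
      = ∫ y in (0:ℝ)..Real.pi, Real.exp (c * Real.cos y) := by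
    have := intervalIntegral.integral_comp_neg (a := (0:ℝ)) (b := Real.pi)
      (fun y => Real.exp (c * Real.cos y))
    simp only [Real.cos_neg, neg_zero] at this
    rw [← this]
  rw [hneg]
  unfold besselI0
  have hπ : Real.pi ≠ 0 := Real.pi_ne_zero
  field_simp
  ring

lemma gauss2 (r a : ℝ) (hr : 0 < r) :
    ∫ p : ℝ × ℝ, Real.exp (-((p.1 - a) ^ 2 + p.2 ^ 2) / r) = Real.pi * r := by
  have h1 : ∀ p : ℝ × ℝ, Real.exp (-((p.1 - a) ^ 2 + p.2 ^ 2) / r)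
      = Real.exp (-(1/r) * (p.1 - a) ^ 2) * Real.exp (-(1/r) * p.2 ^ 2) := by
    intro p
    rw [← Real.exp_add]
    congr 1
    field_simp
    ring
  simp_rw [h1]
  rw [Measure.volume_eq_prod, MeasureTheory.integral_prod_mul
    (fun x : ℝ => Real.exp (-(1/r) * (x - a) ^ 2)) (fun y : ℝ => Real.exp (-(1/r) * y ^ 2))]
  have h2 : (∫ x : ℝ, Real.exp (-(1/r) * (x - a) ^ 2)) = Real.sqrt (Real.pi * r) := by
    rw [integral_sub_right_eq_self (fun x => Real.exp (-(1/r) * x ^ 2)) a,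
      integral_gaussian]
    rw [div_div_eq_mul_div, div_one]
  have h3 : (∫ x : ℝ, Real.exp (-(1/r) * x ^ 2)) = Real.sqrt (Real.pi * r) := by
    rw [integral_gaussian, div_div_eq_mul_div, div_one]
  rw [h2, h3]
  exact Real.mul_self_sqrt (by positivity)

lemma key (r a : ℝ) (hr : 0 < r) (ha : 0 ≤ a) :
    ∫ v in Set.Ioi (0:ℝ),
      v * Real.exp (-v ^ 2 / r) * Real.exp (-a ^ 2 / r) * besselI0 (2 * a * v / r)
      = r / 2 := by
  have hpolar : ∫ p in polarCoord.target,
      p.1 • Real.exp (-(((polarCoord.symm p).1 - a) ^ 2 + (polarCoord.symm p).2 ^ 2) / r)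
      = Real.pi * r := by
    rw [integral_comp_polarCoord_symm
      (fun q : ℝ × ℝ => Real.exp (-((q.1 - a) ^ 2 + q.2 ^ 2) / r))]
    exact gauss2 r a hr
  have hexp : ∀ p : ℝ × ℝ,
      p.1 • Real.exp (-(((polarCoord.symm p).1 - a) ^ 2 + (polarCoord.symm p).2 ^ 2) / r)
      = p.1 * Real.exp (-(p.1 ^ 2 + a ^ 2 - 2 * a * p.1 * Real.cos p.2) / r) := by
    intro p
    have hsymm : polarCoord.symm p = (p.1 * Real.cos p.2, p.1 * Real.sin p.2) := rfl
    rw [hsymm, smul_eq_mul]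
    congr 2
    have h := Real.sin_sq_add_cos_sq p.2
    field_simp
    nlinarith [h]
  have htarget : polarCoord.target = Set.Ioi (0:ℝ) ×ˢ Set.Ioo (-Real.pi) Real.pi := rfl
  rw [htarget] at hpolar
  simp_rw [hexp] at hpolar
  set G : ℝ × ℝ → ℝ :=
    fun p => p.1 * Real.exp (-(p.1 ^ 2 + a ^ 2 - 2 * a * p.1 * Real.cos p.2) / r) with hG
  have hGint : IntegrableOn G (Set.Ioi (0:ℝ) ×ˢ Set.Ioo (-Real.pi) Real.pi) := by
    have h1 : Integrable (fun x : ℝ => (x + a) * Real.exp (-(1/r) * x ^ 2)) := by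
      have := (integrable_mul_exp_neg_mul_sq (b := 1/r) (by positivity)).add
        ((integrable_exp_neg_mul_sq (b := 1/r) (by positivity)).const_mul a)
      refine this.congr ?_
      filter_upwards with x
      simp only [Pi.add_apply]
      ring
    have h2 : Integrable (fun x : ℝ => x * Real.exp (-(1/r) * (x - a) ^ 2)) := by
      have := h1.comp_sub_right a
      refine this.congr ?_
      filter_upwards with x
      simp
    have hbound : Integrable (fun p : ℝ × ℝ => (p.1 * Real.exp (-(1/r) * (p.1 - a) ^ 2)) * 1)
        ((volume.restrict (Set.Ioi (0:ℝ))).prod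
          (volume.restrict (Set.Ioo (-Real.pi) Real.pi))) :=
      Integrable.mul_prod h2.integrableOn (integrable_const 1)
    rw [Measure.prod_restrict] at hbound
    refine Integrable.mono' (by simpa [Measure.volume_eq_prod] using hbound) ?_ ?_
    · exact (Continuous.aestronglyMeasurable (by fun_prop)).restrict
    · filter_upwards [ae_restrict_mem ((measurableSet_Ioi).prod measurableSet_Ioo)] with p hp
      obtain ⟨hp1, hp2⟩ := hp
      have hp1' : 0 < p.1 := hp1
      rw [hG]
      simp only [Real.norm_eq_abs, abs_mul, abs_of_pos hp1', abs_of_pos (Real.exp_pos _), mul_one]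
      refine mul_le_mul_of_nonneg_left ?_ hp1'.le
      apply Real.exp_le_exp.2
      have hkey : (p.1 - a) ^ 2 ≤ p.1 ^ 2 + a ^ 2 - 2 * a * p.1 * Real.cos p.2 := by
        nlinarith [mul_nonneg (mul_nonneg ha hp1'.le) (sub_nonneg.2 (Real.cos_le_one p.2))]
      have hrw : -(r⁻¹ * (p.1 - a) ^ 2) = -((p.1 - a) ^ 2) / r := by ring
      rw [hrw]
      exact (div_le_div_iff_of_pos_right hr).2 (by linarith)
  have hfub := MeasureTheory.setIntegral_prod (μ := volume) (ν := volume) G hGint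
  rw [← Measure.volume_eq_prod] at hfub
  rw [hfub] at hpolar
  have hinner : ∀ x : ℝ, ∫ y in Set.Ioo (-Real.pi) Real.pi, G (x, y)
      = (2 * Real.pi) * (x * Real.exp (-x ^ 2 / r) * Real.exp (-a ^ 2 / r)
          * besselI0 (2 * a * x / r)) := by
    intro x
    have hsplit : ∀ y : ℝ, G (x, y)
        = (x * Real.exp (-(x ^ 2 + a ^ 2) / r)) * Real.exp ((2 * a * x / r) * Real.cos y) := by
      intro y
      rw [hG]
      simp only
      conv_rhs => rw [mul_assoc, ← Real.exp_add]
      congr 2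
      field_simp
      ring
    simp_rw [hsplit]
    rw [MeasureTheory.integral_const_mul, cosint_Ioo]
    have he : Real.exp (-(x ^ 2 + a ^ 2) / r)
        = Real.exp (-x ^ 2 / r) * Real.exp (-a ^ 2 / r) := by
      rw [← Real.exp_add]; congr 1; ring
    rw [he]; ring
  simp_rw [hinner] at hpolar
  rw [MeasureTheory.integral_const_mul] at hpolar
  have hne : (2 * Real.pi) ≠ 0 := by positivity
  exact mul_left_cancel₀ hne (hpolar.trans (by ring))

/-- For `0 < r ≤ 1` and `u > 0`,
`(2/r) ∫_{-∞}^0 (-v) e^{-v²/r} e^{-(1-r)u²/r} I₀(2√(1-r) v u / r) dv = 1`. -/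
theorem CL_normal_component_normalization (r u : ℝ) (hr : 0 < r) (hr' : r ≤ 1)
    (hu : 0 < u) :
    (2 / r) * ∫ v in Set.Iio (0:ℝ),
      (-v) * Real.exp (-v ^ 2 / r) * Real.exp (-(1 - r) * u ^ 2 / r) *
        besselI0 (2 * Real.sqrt (1 - r) * v * u / r) = 1 := by
  set a : ℝ := Real.sqrt (1 - r) * u with ha
  have ha0 : 0 ≤ a := mul_nonneg (Real.sqrt_nonneg _) hu.le
  have ha2 : a ^ 2 = (1 - r) * u ^ 2 := by
    rw [ha, mul_pow, Real.sq_sqrt (by linarith)]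
  have hIio : (∫ v in Set.Iio (0:ℝ),
      (-v) * Real.exp (-v ^ 2 / r) * Real.exp (-(1 - r) * u ^ 2 / r) *
        besselI0 (2 * Real.sqrt (1 - r) * v * u / r))
      = ∫ v in Set.Ioi (0:ℝ),
        v * Real.exp (-v ^ 2 / r) * Real.exp (-a ^ 2 / r) * besselI0 (2 * a * v / r) := by
    rw [← MeasureTheory.integral_Iic_eq_integral_Iio,
      ← neg_zero (G := ℝ), ← integral_comp_neg_Ioi]
    rw [neg_zero]
    apply MeasureTheory.setIntegral_congr_fun measurableSet_Ioi
    intro v _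
    simp only
    have harg : 2 * Real.sqrt (1 - r) * (-v) * u / r = -(2 * a * v / r) := by
      rw [ha]; ring
    rw [harg, besselI0_neg]
    rw [ha2]
    ring_nf
  rw [hIio, key r a hr ha0]
  field_simp
end

section
/- Let a > 0, b > 0, ε > 0 with a + ε < b. There exist constants C > 0 and δ_0 > 0 (depending only on a, b, ε) such that for every δ with 0 < δ ≤ δ_0 and every w ≥ 0, 2b ∫_{(b/(b-a-ε)) w + δ^{-1}}^{∞} v · e^{ε v^2} e^{a v^2} e^{-b v^2} e^{-b w^2} I_0(2 b v w) dv ≤ C e^{-(b-a-ε)/(4 δ^2)} · ( b/(b-a-ε) ) · exp( ((a+ε)b/(b-a-ε)) w^2 ). -/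
open MeasureTheory Real

lemma besselI0_le_exp {y : ℝ} (hy : 0 ≤ y) : besselI0 y ≤ Real.exp y := by
  unfold besselI0
  have h1 : (∫ φ in (0:ℝ)..Real.pi, Real.exp (y * Real.cos φ))
      ≤ ∫ _ in (0:ℝ)..Real.pi, Real.exp y := by
    apply intervalIntegral.integral_mono_on Real.pi_pos.le
    · exact (Continuous.intervalIntegrable (by continuity) _ _)
    · exact intervalIntegrable_const
    · intro x _
      exact Real.exp_le_exp.mpr (by nlinarith [Real.cos_le_one x])
  have h2 : (∫ _ in (0:ℝ)..Real.pi, Real.exp y) = Real.pi * Real.exp y := by simp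
  calc (1 / Real.pi) * ∫ φ in (0:ℝ)..Real.pi, Real.exp (y * Real.cos φ)
      ≤ (1 / Real.pi) * (Real.pi * Real.exp y) := by
        apply mul_le_mul_of_nonneg_left _ (by positivity)
        rw [← h2]; exact h1
    _ = Real.exp y := by field_simp

/-- Sharper bound: `I₀(y) ≤ e^y / √y` for `y > 0`. -/
lemma besselI0_le_exp_div_sqrt {y : ℝ} (hy : 0 < y) :
    besselI0 y ≤ Real.exp y / Real.sqrt y := by
  have hπ := Real.pi_pos
  set α : ℝ := 2 * y / Real.pi ^ 2 with hα
  have hα0 : 0 < α := by positivity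
  have h1 : (∫ φ in (0:ℝ)..Real.pi, Real.exp (y * Real.cos φ))
      ≤ ∫ φ in (0:ℝ)..Real.pi, Real.exp y * Real.exp (-α * φ ^ 2) := by
    apply intervalIntegral.integral_mono_on Real.pi_pos.le
    · exact (Continuous.intervalIntegrable (by continuity) _ _)
    · exact (Continuous.intervalIntegrable (by continuity) _ _)
    · intro x hx
      rw [← Real.exp_add]
      apply Real.exp_le_exp.mpr
      have hcos : Real.cos x ≤ 1 - 2 / Real.pi ^ 2 * x ^ 2 :=
        Real.cos_le_one_sub_mul_cos_sq (by rw [abs_of_nonneg hx.1]; exact hx.2)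
      have := mul_le_mul_of_nonneg_left hcos hy.le
      rw [hα]
      have h' : y * (1 - 2 / Real.pi ^ 2 * x ^ 2) = y + -(2 * y / Real.pi ^ 2) * x ^ 2 := by
        field_simp
        ring
      linarith
  have h2 : (∫ φ in (0:ℝ)..Real.pi, Real.exp y * Real.exp (-α * φ ^ 2))
      = Real.exp y * ∫ φ in (0:ℝ)..Real.pi, Real.exp (-α * φ ^ 2) := by
    rw [intervalIntegral.integral_const_mul]
  have h3 : (∫ φ in (0:ℝ)..Real.pi, Real.exp (-α * φ ^ 2))
      ≤ ∫ φ in Set.Ioi (0:ℝ), Real.exp (-α * φ ^ 2) := by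
    rw [intervalIntegral.integral_of_le Real.pi_pos.le]
    apply setIntegral_mono_set (integrable_exp_neg_mul_sq hα0).integrableOn
    · filter_upwards with x using (Real.exp_pos _).le
    · exact HasSubset.Subset.eventuallyLE Set.Ioc_subset_Ioi_self
  have h4 : (∫ φ in Set.Ioi (0:ℝ), Real.exp (-α * φ ^ 2)) = Real.sqrt (Real.pi / α) / 2 :=
    integral_gaussian_Ioi α
  have h5 : Real.sqrt (Real.pi / α) ≤ 2 * Real.pi / Real.sqrt y := by
    have h6 : Real.pi / α ≤ (2 * Real.pi / Real.sqrt y) ^ 2 := by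
      have hsy : Real.sqrt y ^ 2 = y := Real.sq_sqrt hy.le
      have hsy0 : 0 < Real.sqrt y := Real.sqrt_pos.mpr hy
      rw [div_pow, hsy, hα]
      rw [div_le_div_iff₀ (by positivity) hy]
      have hcalc : (2 * Real.pi) ^ 2 * (2 * y / Real.pi ^ 2) = 8 * y := by
        field_simp
        ring
      rw [hcalc]
      have hπ8 : Real.pi ≤ 8 := by nlinarith [Real.pi_lt_d2]
      nlinarith
    calc Real.sqrt (Real.pi / α) ≤ Real.sqrt ((2 * Real.pi / Real.sqrt y) ^ 2) :=
          Real.sqrt_le_sqrt h6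
      _ = 2 * Real.pi / Real.sqrt y := Real.sqrt_sq (by positivity)
  have hsy0 : 0 < Real.sqrt y := Real.sqrt_pos.mpr hy
  calc besselI0 y ≤ (1 / Real.pi) * (Real.exp y * (Real.sqrt (Real.pi / α) / 2)) := by
        unfold besselI0
        apply mul_le_mul_of_nonneg_left _ (by positivity)
        rw [← h4]
        refine h1.trans ?_
        rw [h2]
        exact mul_le_mul_of_nonneg_left h3 (Real.exp_pos _).le
    _ ≤ (1 / Real.pi) * (Real.exp y * ((2 * Real.pi / Real.sqrt y) / 2)) := by
        gcongr
    _ = Real.exp y / Real.sqrt y := by field_simp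

/-- The shifted Gaussian tail integral. -/
lemma shift_tail_eq {c : ℝ} (hc : 0 < c) (s L : ℝ) :
    (∫ v in Set.Ioi L, (v - s) * Real.exp (-c * (v - s) ^ 2))
      = (2 * c)⁻¹ * Real.exp (-c * (L - s) ^ 2) := by
  have hderiv : ∀ x ∈ Set.Ioi L,
      HasDerivAt (fun v : ℝ => -(2 * c)⁻¹ * Real.exp (-c * (v - s) ^ 2))
        ((x - s) * Real.exp (-c * (x - s) ^ 2)) x := by
    intro x _
    have h1 : HasDerivAt (fun v : ℝ => -c * (v - s) ^ 2)
        (-c * (2 * (x - s) ^ 1 * 1)) x :=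
      (((hasDerivAt_id x).sub_const s).pow 2).const_mul (-c)
    have h2 := (h1.exp).const_mul (-(2 * c)⁻¹)
    refine h2.congr_deriv ?_
    linear_combination ((x - s) * Real.exp (-c * (x - s) ^ 2)) * (mul_inv_cancel₀ (mul_ne_zero two_ne_zero hc.ne') : (2 * c) * (2 * c)⁻¹ = 1)
  have hcont : ContinuousWithinAt (fun v : ℝ => -(2 * c)⁻¹ * Real.exp (-c * (v - s) ^ 2))
      (Set.Ici L) L := Continuous.continuousWithinAt (by continuity)
  have hint : IntegrableOn (fun v : ℝ => (v - s) * Real.exp (-c * (v - s) ^ 2))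
      (Set.Ioi L) :=
    ((integrable_mul_exp_neg_mul_sq hc).comp_sub_right s).integrableOn
  have htend : Filter.Tendsto (fun v : ℝ => -(2 * c)⁻¹ * Real.exp (-c * (v - s) ^ 2))
      Filter.atTop (nhds 0) := by
    have hsq : Filter.Tendsto (fun v : ℝ => (v - s) ^ 2) Filter.atTop Filter.atTop :=
      (Filter.tendsto_pow_atTop two_ne_zero).comp (Filter.tendsto_atTop_add_const_right _ (-s)
        Filter.tendsto_id) |>.congr (fun x => by simp only [Function.comp_apply, id_eq]; ring)
    have h0 : Filter.Tendsto (fun v : ℝ => -c * (v - s) ^ 2) Filter.atTop Filter.atBot :=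
      hsq.const_mul_atTop_of_neg (by linarith)
    have := (Real.tendsto_exp_atBot).comp h0
    simpa using this.const_mul (-(2 * c)⁻¹)
  have := MeasureTheory.integral_Ioi_of_hasDerivAt_of_tendsto hcont hderiv hint htend
  rw [this]; ring

set_option maxHeartbeats 1000000 in
/-- For `a, b, ε > 0` with `a + ε < b` there exist `C > 0` and `δ₀ > 0` such that
for all `0 < δ ≤ δ₀` and all `w ≥ 0`,
`2b ∫_{(b/(b-a-ε))w + δ⁻¹}^∞ v e^{εv²} e^{av²} e^{-bv²} e^{-bw²} I₀(2bvw) dv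
  ≤ C e^{-(b-a-ε)/(4δ²)} (b/(b-a-ε)) exp(((a+ε)b/(b-a-ε)) w²)`. -/
theorem bessel_gaussian_tail_bound (a b ε : ℝ) (ha : 0 < a) (hb : 0 < b)
    (hε : 0 < ε) (hab : a + ε < b) :
    ∃ C > (0:ℝ), ∃ δ₀ > (0:ℝ), ∀ δ : ℝ, 0 < δ → δ ≤ δ₀ → ∀ w : ℝ, 0 ≤ w →
      2 * b * ∫ v in Set.Ioi ((b / (b - a - ε)) * w + δ⁻¹),
          v * Real.exp (ε * v ^ 2) * Real.exp (a * v ^ 2) * Real.exp (-b * v ^ 2)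
            * Real.exp (-b * w ^ 2) * besselI0 (2 * b * v * w)
        ≤ C * Real.exp (-(b - a - ε) / (4 * δ ^ 2)) * (b / (b - a - ε))
            * Real.exp ((a + ε) * b / (b - a - ε) * w ^ 2) := by
  have hc : 0 < b - a - ε := by linarith
  set c := b - a - ε with hcdef
  set C : ℝ := (1 + b / c) * (1 + Real.sqrt c / b) with hCdef
  have hsc : 0 < Real.sqrt c := Real.sqrt_pos.mpr hc
  have hC : 0 < C := by positivity
  refine ⟨C, hC, 1, one_pos, fun δ hδ hδ1 w hw => ?_⟩
  set s : ℝ := (b / c) * w with hsdef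
  have hs : 0 ≤ s := by positivity
  set L : ℝ := s + δ⁻¹ with hLdef
  have hL : 0 < L := by positivity
  set t : ℝ := a + ε with htdef
  -- choose the Bessel bound multiplier Q depending on the size of w
  obtain ⟨Q, hQ0, hQC, hQ⟩ : ∃ Q : ℝ, 0 ≤ Q ∧ (1 + s * δ) * Q ≤ C ∧
      ∀ v ∈ Set.Ioi L, besselI0 (2 * b * v * w) ≤ Q * Real.exp (2 * b * v * w) := by
    rcases le_or_gt w 1 with hw1 | hw1
    · refine ⟨1, zero_le_one, ?_, fun v hv => ?_⟩
      · have h1 : s * δ ≤ b / c := by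
          have : s ≤ b / c := by
            rw [hsdef]
            nlinarith [div_pos hb hc]
          nlinarith [div_pos hb hc]
        have h2 : 1 + b / c ≤ C := by
          rw [hCdef]
          nlinarith [div_pos hb hc, div_nonneg hsc.le hb.le]
        linarith
      · have hv0 : 0 < v := hL.trans hv
        rw [one_mul]
        exact besselI0_le_exp (by positivity)
    · refine ⟨Real.sqrt c / (b * w), by positivity, ?_, fun v hv => ?_⟩
      · have hw0 : (0:ℝ) < w := lt_trans one_pos hw1
        have h2 : Real.sqrt c ^ 2 = c := Real.sq_sqrt hc.le
        rw [hsdef, hCdef]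
        have hbw : (0:ℝ) < b * w := by positivity
        have key : (1 + b / c * w * δ) * (Real.sqrt c / (b * w))
            ≤ (1 + b / c) * (1 + Real.sqrt c / b) := by
          have e1 : (1 + b / c * w * δ) * (Real.sqrt c / (b * w))
              = Real.sqrt c / (b * w) + δ * (Real.sqrt c / c) := by
            field_simp
          have e2 : Real.sqrt c / (b * w) ≤ Real.sqrt c / b := by
            rw [div_le_div_iff₀ (by positivity) hb]
            nlinarith [mul_nonneg (mul_nonneg hsc.le hb.le) (by linarith : (0:ℝ) ≤ w - 1)]
          have e3 : δ * (Real.sqrt c / c) ≤ Real.sqrt c / c := by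
            nlinarith [div_nonneg hsc.le hc.le]
          have e4 : Real.sqrt c / c = 1 / Real.sqrt c := by
            rw [div_eq_div_iff hc.ne' hsc.ne', one_mul]
            exact Real.mul_self_sqrt hc.le
          have e5 : b / c * (Real.sqrt c / b) = 1 / Real.sqrt c := by
            rw [div_mul_div_comm, div_eq_div_iff (by positivity) hsc.ne', one_mul]
            linear_combination b * Real.mul_self_sqrt hc.le
          have e6 : (1 + b / c) * (1 + Real.sqrt c / b)
              = 1 + Real.sqrt c / b + b / c + 1 / Real.sqrt c := by
            rw [show (1 + b / c) * (1 + Real.sqrt c / b)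
                = 1 + Real.sqrt c / b + b / c + b / c * (Real.sqrt c / b) from by ring, e5]
          rw [e1, e6]
          have hbc : (0:ℝ) < b / c := div_pos hb hc
          have := e3.trans_eq e4
          linarith
        exact key
      · have hv0 : 0 < v := hL.trans hv
        have hw0 : 0 < w := by linarith
        have hy : 0 < 2 * b * v * w := by positivity
        have h1 := besselI0_le_exp_div_sqrt hy
        refine h1.trans ?_
        rw [div_eq_mul_inv, mul_comm (Real.exp _)]
        apply mul_le_mul_of_nonneg_right _ (Real.exp_pos _).le
        have hsv : b * w / Real.sqrt c ≤ Real.sqrt (2 * b * v * w) := by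
          rw [Real.le_sqrt (by positivity) (by positivity)]
          have h2 : Real.sqrt c ^ 2 = c := Real.sq_sqrt hc.le
          rw [div_pow, h2]
          rw [div_le_iff₀ hc]
          have hvs : s ≤ v := le_trans (by rw [hLdef]; linarith [inv_pos.mpr hδ] : s ≤ L) (le_of_lt hv)
          rw [hsdef] at hvs
          have : b / c * w * w ≤ v * w := by nlinarith
          rw [div_mul_eq_mul_div, div_mul_eq_mul_div, div_le_iff₀ hc] at this
          nlinarith
        calc (Real.sqrt (2 * b * v * w))⁻¹ ≤ (b * w / Real.sqrt c)⁻¹ := by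
              apply inv_anti₀ (by positivity) hsv
          _ = Real.sqrt c / (b * w) := by
              rw [inv_div]
  -- pointwise bound of the integrand
  set B : ℝ := Q * (1 + s * δ) * Real.exp (t * b / c * w ^ 2) with hBdef
  have hB0 : 0 ≤ B := by positivity
  have hpoint : ∀ v ∈ Set.Ioi L,
      v * Real.exp (ε * v ^ 2) * Real.exp (a * v ^ 2) * Real.exp (-b * v ^ 2)
        * Real.exp (-b * w ^ 2) * besselI0 (2 * b * v * w)
      ≤ B * ((v - s) * Real.exp (-c * (v - s) ^ 2)) := by
    intro v hv
    have hv0 : 0 < v := hL.trans hv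
    have hvs : δ⁻¹ < v - s := by
      have : L < v := hv
      rw [hLdef] at this; linarith
    have hvs0 : 0 < v - s := lt_trans (by positivity) hvs
    have hIQ := hQ v hv
    have harg : ε * v ^ 2 + a * v ^ 2 + -b * v ^ 2 + -b * w ^ 2 + 2 * b * v * w
        = -c * (v - s) ^ 2 + t * b / c * w ^ 2 := by
      rw [hsdef, htdef, hcdef]
      have hc' : b - a - ε ≠ 0 := hc.ne'
      field_simp
      ring
    calc v * Real.exp (ε * v ^ 2) * Real.exp (a * v ^ 2) * Real.exp (-b * v ^ 2)
          * Real.exp (-b * w ^ 2) * besselI0 (2 * b * v * w)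
        ≤ v * Real.exp (ε * v ^ 2) * Real.exp (a * v ^ 2) * Real.exp (-b * v ^ 2)
          * Real.exp (-b * w ^ 2) * (Q * Real.exp (2 * b * v * w)) :=
          mul_le_mul_of_nonneg_left hIQ (by positivity)
      _ = Q * (v * Real.exp (ε * v ^ 2 + a * v ^ 2 + -b * v ^ 2 + -b * w ^ 2
            + 2 * b * v * w)) := by
          rw [Real.exp_add, Real.exp_add, Real.exp_add, Real.exp_add]
          ring
      _ = Q * v * (Real.exp (-c * (v - s) ^ 2) * Real.exp (t * b / c * w ^ 2)) := by
          rw [harg, Real.exp_add]; ring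
      _ ≤ Q * ((1 + s * δ) * (v - s)) * (Real.exp (-c * (v - s) ^ 2)
            * Real.exp (t * b / c * w ^ 2)) := by
          apply mul_le_mul_of_nonneg_right _ (by positivity)
          apply mul_le_mul_of_nonneg_left _ hQ0
          have h1 : (1:ℝ) ≤ δ * (v - s) := by
            have h2 : δ * δ⁻¹ ≤ δ * (v - s) := mul_le_mul_of_nonneg_left hvs.le hδ.le
            rwa [mul_inv_cancel₀ hδ.ne'] at h2
          nlinarith [mul_le_mul_of_nonneg_left h1 hs]
      _ = B * ((v - s) * Real.exp (-c * (v - s) ^ 2)) := by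
          rw [hBdef]; ring
  -- integral comparison
  have hmono : (∫ v in Set.Ioi L,
        v * Real.exp (ε * v ^ 2) * Real.exp (a * v ^ 2) * Real.exp (-b * v ^ 2)
          * Real.exp (-b * w ^ 2) * besselI0 (2 * b * v * w))
      ≤ ∫ v in Set.Ioi L, B * ((v - s) * Real.exp (-c * (v - s) ^ 2)) := by
    apply MeasureTheory.integral_mono_of_nonneg
    · rw [Filter.EventuallyLE, ae_restrict_iff' measurableSet_Ioi]
      filter_upwards with v hv
      have hv0 : 0 < v := hL.trans hv
      have hI0 : 0 ≤ besselI0 (2 * b * v * w) := by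
        unfold besselI0
        apply mul_nonneg (by positivity)
        apply intervalIntegral.integral_nonneg Real.pi_pos.le
        intro x _; exact (Real.exp_pos _).le
      positivity
    · exact (((integrable_mul_exp_neg_mul_sq hc).comp_sub_right s).const_mul B).integrableOn
    · rw [Filter.EventuallyLE, ae_restrict_iff' measurableSet_Ioi]
      filter_upwards with v hv
      exact hpoint v hv
  have hval : (∫ v in Set.Ioi L, B * ((v - s) * Real.exp (-c * (v - s) ^ 2)))
      = B * ((2 * c)⁻¹ * Real.exp (-c * (L - s) ^ 2)) := by
    rw [MeasureTheory.integral_const_mul, shift_tail_eq hc]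
  have hLs : L - s = δ⁻¹ := by rw [hLdef]; ring
  -- put everything together
  have hfinal : 2 * b * ∫ v in Set.Ioi L,
        v * Real.exp (ε * v ^ 2) * Real.exp (a * v ^ 2) * Real.exp (-b * v ^ 2)
          * Real.exp (-b * w ^ 2) * besselI0 (2 * b * v * w)
      ≤ (b / c) * (Q * (1 + s * δ)) * Real.exp (-c * δ⁻¹ ^ 2)
          * Real.exp (t * b / c * w ^ 2) := by
    refine (mul_le_mul_of_nonneg_left (hmono.trans_eq hval) (by positivity : (0:ℝ) ≤ 2 * b)).trans ?_
    rw [hLs, hBdef]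
    rw [show 2 * b * (Q * (1 + s * δ) * Real.exp (t * b / c * w ^ 2)
        * ((2 * c)⁻¹ * Real.exp (-c * δ⁻¹ ^ 2)))
        = (b / c) * (Q * (1 + s * δ)) * Real.exp (-c * δ⁻¹ ^ 2)
          * Real.exp (t * b / c * w ^ 2) by field_simp]
  refine hfinal.trans ?_
  rw [show C * Real.exp (-c / (4 * δ ^ 2)) * (b / c) * Real.exp (t * b / c * w ^ 2)
      = (b / c) * (C * Real.exp (-c / (4 * δ ^ 2))) * Real.exp (t * b / c * w ^ 2) by ring]
  apply mul_le_mul_of_nonneg_right _ (Real.exp_pos _).le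
  rw [mul_assoc]
  apply mul_le_mul_of_nonneg_left _ (by positivity : (0:ℝ) ≤ b / c)
  have hexp : Real.exp (-c * δ⁻¹ ^ 2) ≤ Real.exp (-c / (4 * δ ^ 2)) := by
    apply Real.exp_le_exp.mpr
    have h1 : δ⁻¹ ^ 2 = 1 / δ ^ 2 := by field_simp
    rw [h1]
    have h2 : c / (4 * δ ^ 2) ≤ c * (1 / δ ^ 2) := by
      rw [div_le_iff₀ (by positivity)]
      have h3 : c * (1 / δ ^ 2) * (4 * δ ^ 2) = 4 * c := by field_simp
      rw [h3]; linarith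
    rw [neg_div, neg_mul]
    exact neg_le_neg h2
  calc Q * (1 + s * δ) * Real.exp (-c * δ⁻¹ ^ 2)
      ≤ C * Real.exp (-c * δ⁻¹ ^ 2) := by
        apply mul_le_mul_of_nonneg_right _ (Real.exp_pos _).le
        rw [mul_comm Q]
        exact hQC
    _ ≤ C * Real.exp (-c / (4 * δ ^ 2)) :=
        mul_le_mul_of_nonneg_left hexp hC.le
end
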